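/- arXiv:2506.23054 — 4 statements merged into one kernel-verified Lean document; each statement's English description precedes it below -/
import Mathlib

section
/- Let 𝒢 be a hereditary class of finite simple graphs and let k ≥ 1 be an integer. If 𝒢 is degree-bounded, then the k-extension 𝒢^(k) of 𝒢 is also degree-bounded. -/
open Classical

/-- The biclique number of `G`: the largest `s` such that `G` contains `K_{s,s}` as a (not
necessarily induced) subgraph. -/
noncomputable def bicliqueNum {V : Type*} [Fintype V] (G : SimpleGraph V) : ℕ :=
  sSup {s | ∃ A B : Finset V, Disjoint A B ∧ A.card = s ∧ B.card = s ∧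
    ∀ a ∈ A, ∀ b ∈ B, G.Adj a b}

/-- The degeneracy of `G`: the least `d` such that every nonempty subgraph of `G` has a vertex
of degree at most `d` (equivalently, every nonempty set `S` of vertices contains a vertex with
at most `d` neighbours in `S`). -/
noncomputable def degeneracy {V : Type*} [Fintype V] (G : SimpleGraph V) : ℕ :=
  sInf {d | ∀ S : Finset V, S.Nonempty → ∃ v ∈ S, (S.filter fun u => G.Adj v u).card ≤ d}

/-- Given a `k`-edge-colouring `φ` of `G`, a colour `c` and a vertex subset `S`, the graph on
`S` whose edges are the colour-`c` edges of `G` with both endpoints in `S`. -/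
def monochromaticInduced {V : Type*} (G : SimpleGraph V) {k : ℕ} (φ : Sym2 V → Fin k)
    (c : Fin k) (S : Set V) : SimpleGraph S where
  Adj u v := G.Adj u.1 v.1 ∧ φ s(u.1, v.1) = c
  symm := ⟨fun u v ⟨h, hc⟩ => ⟨h.symm, by rwa [Sym2.eq_swap]⟩⟩
  loopless := ⟨fun u ⟨h, _⟩ => G.ne_of_adj h rfl⟩

private lemma sum_deg_le {W : Type*} (H : SimpleGraph W) (d : ℕ)
    (h : ∀ T : Finset W, T.Nonempty → ∃ v ∈ T, (T.filter fun u => H.Adj v u).card ≤ d)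
    (T : Finset W) : (∑ v ∈ T, (T.filter fun u => H.Adj v u).card) ≤ 2 * d * T.card := by
  classical
  induction T using Finset.strongInduction with
  | _ T ih =>
    rcases T.eq_empty_or_nonempty with rfl | hT
    · simp
    obtain ⟨v, hv, hd⟩ := h T hT
    have hvf : v ∉ T.filter fun u => H.Adj v u := by simp
    have key : ∀ u ∈ T.erase v, (T.filter fun w => H.Adj u w).card
        = ((T.erase v).filter fun w => H.Adj u w).card + (if H.Adj u v then 1 else 0) := by
      intro u hu
      rw [Finset.filter_erase]
      by_cases hadj : H.Adj u v
      · rw [if_pos hadj, Finset.card_erase_of_mem (by simp [hv, hadj])]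
        have hp : 0 < (T.filter fun w => H.Adj u w).card :=
          Finset.card_pos.2 ⟨v, by simp [hv, hadj]⟩
        omega
      · rw [if_neg hadj, Finset.erase_eq_of_notMem (by simp [hadj])]
        omega
    have hsum : ∑ u ∈ T, (T.filter fun w => H.Adj u w).card
        = (T.filter fun w => H.Adj v w).card
          + ∑ u ∈ T.erase v, (T.filter fun w => H.Adj u w).card :=
      (Finset.add_sum_erase T _ hv).symm
    have hsum2 : ∑ u ∈ T.erase v, (T.filter fun w => H.Adj u w).card
        = (∑ u ∈ T.erase v, ((T.erase v).filter fun w => H.Adj u w).card)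
          + ∑ u ∈ T.erase v, (if H.Adj u v then 1 else 0) := by
      rw [← Finset.sum_add_distrib]
      exact Finset.sum_congr rfl key
    have hfe : ((T.erase v).filter fun u => H.Adj u v) = T.filter fun u => H.Adj v u := by
      rw [Finset.filter_erase]
      have : ((T.filter fun u => H.Adj u v)) = T.filter fun u => H.Adj v u := by
        apply Finset.filter_congr; intro u _; simp [SimpleGraph.adj_comm]
      rw [this, Finset.erase_eq_of_notMem hvf]
    have hcount : (∑ u ∈ T.erase v, (if H.Adj u v then 1 else 0))
        = (T.filter fun u => H.Adj v u).card := by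
      rw [← hfe, Finset.card_filter]
    have hih := ih (T.erase v) (Finset.erase_ssubset hv)
    have hcarde : (T.erase v).card = T.card - 1 := Finset.card_erase_of_mem hv
    have hc1 : 1 ≤ T.card := Finset.card_pos.2 hT
    rw [hsum, hsum2, hcount]
    rw [hcarde] at hih
    have hmul : 2 * d * T.card = 2 * d * (T.card - 1) + 2 * d := by
      have h1 : T.card - 1 + 1 = T.card := by omega
      calc 2 * d * T.card = 2 * d * (T.card - 1 + 1) := by rw [h1]
        _ = 2 * d * (T.card - 1) + 2 * d := by ring
    omega

private lemma bicliqueNum_mono {V : Type*} [Fintype V] (G : SimpleGraph V) (S : Set V)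
    [Fintype S] (H : SimpleGraph S) (hH : ∀ a b : S, H.Adj a b → G.Adj a.1 b.1) :
    bicliqueNum H ≤ bicliqueNum G := by
  classical
  have hbdd : BddAbove {s | ∃ A B : Finset V, Disjoint A B ∧ A.card = s ∧ B.card = s ∧
      ∀ a ∈ A, ∀ b ∈ B, G.Adj a b} := by
    refine ⟨Fintype.card V, fun s hs => ?_⟩
    obtain ⟨A, B, _, hA, _, _⟩ := hs
    exact hA ▸ Finset.card_le_univ A
  unfold bicliqueNum
  refine csSup_le ?_ ?_
  · exact ⟨0, ∅, ∅, by simp⟩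
  rintro s ⟨A, B, hdisj, hA, hB, hadj⟩
  apply le_csSup hbdd
  refine ⟨A.image Subtype.val, B.image Subtype.val, ?_, ?_, ?_, ?_⟩
  · exact (Finset.disjoint_image Subtype.val_injective).2 hdisj
  · rw [Finset.card_image_of_injective _ Subtype.val_injective, hA]
  · rw [Finset.card_image_of_injective _ Subtype.val_injective, hB]
  · rintro a ha b hb
    obtain ⟨a', ha', rfl⟩ := Finset.mem_image.1 ha
    obtain ⟨b', hb', rfl⟩ := Finset.mem_image.1 hb
    exact hH _ _ (hadj a' ha' b' hb')

private lemma degeneracy_spec {W : Type*} [Fintype W] (H : SimpleGraph W)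
    (T : Finset W) (hT : T.Nonempty) :
    ∃ v ∈ T, (T.filter fun u => H.Adj v u).card ≤ degeneracy H := by
  have hne : (Fintype.card W) ∈ {d | ∀ S : Finset W, S.Nonempty →
      ∃ v ∈ S, (S.filter fun u => H.Adj v u).card ≤ d} := by
    intro S hS
    obtain ⟨v, hv⟩ := hS
    exact ⟨v, hv, (Finset.card_filter_le _ _).trans (Finset.card_le_univ S)⟩
  exact Nat.sInf_mem (⟨_, hne⟩ : Set.Nonempty _) T hT

/-- If a hereditary class `P` of finite simple graphs is degree-bounded, then
so is its `k`-extension (the class of `(P, k)`-colourable graphs), for every `k ≥ 1`. -/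
theorem stmt2 (k : ℕ) (hk : 1 ≤ k)
    (P : ∀ (V : Type) [Fintype V], SimpleGraph V → Prop)
    (hered : ∀ (V : Type) [Fintype V] (G : SimpleGraph V) (S : Set V),
      P V G → P S (G.induce S))
    (hdb : ∃ f : ℕ → ℕ, ∀ (V : Type) [Fintype V] (G : SimpleGraph V),
      P V G → degeneracy G ≤ f (bicliqueNum G)) :
    ∃ f : ℕ → ℕ, ∀ (V : Type) [Fintype V] (G : SimpleGraph V),
      (∃ φ : Sym2 V → Fin k, ∀ (c : Fin k) (S : Set V),
        P S (monochromaticInduced G φ c S)) →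
      degeneracy G ≤ f (bicliqueNum G) := by
  classical
  obtain ⟨f, hf⟩ := hdb
  refine ⟨fun n => 2 * k * (Finset.range (n + 1)).sup f, ?_⟩
  rintro V _ G ⟨φ, hφ⟩
  set d := (Finset.range (bicliqueNum G + 1)).sup f with hd
  apply Nat.sInf_le
  intro S hS
  set W := (↑S : Set V) with hW
  -- per colour: low-degree vertex in every nonempty finset, with bound d
  have hprop : ∀ c : Fin k, ∀ T : Finset W, T.Nonempty →
      ∃ v ∈ T, (T.filter fun u => (monochromaticInduced G φ c W).Adj v u).card ≤ d := by
    intro c T hT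
    obtain ⟨v, hv, hle⟩ := degeneracy_spec (monochromaticInduced G φ c W) T hT
    refine ⟨v, hv, hle.trans ?_⟩
    have h1 : degeneracy (monochromaticInduced G φ c W)
        ≤ f (bicliqueNum (monochromaticInduced G φ c W)) :=
      @hf (↥W) (@Subtype.fintype V (fun a => a ∈ W) (fun a => Classical.propDecidable _) _)
        (monochromaticInduced G φ c W) (hφ c W)
    have h2 : bicliqueNum (monochromaticInduced G φ c W) ≤ bicliqueNum G :=
      bicliqueNum_mono G W _ (fun a b hab => hab.1)
    exact h1.trans (Finset.le_sup (Finset.mem_range.2 (Nat.lt_succ_of_le h2)))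
  have hsumc : ∀ c : Fin k,
      (∑ v : W, ((Finset.univ.filter fun u =>
        (monochromaticInduced G φ c W).Adj v u)).card)
        ≤ 2 * d * (Finset.univ : Finset W).card := by
    intro c
    exact sum_deg_le (monochromaticInduced G φ c W) d (hprop c) Finset.univ
  -- colour decomposition of the degree of each vertex
  have hdecomp : ∀ v : W, (Finset.univ.filter fun u : W => G.Adj v.1 u.1).card
      = ∑ c : Fin k, (Finset.univ.filter fun u : W =>
          (monochromaticInduced G φ c W).Adj v u).card := by
    intro v
    rw [Finset.card_eq_sum_card_fiberwise
      (f := fun u : W => φ s(v.1, u.1)) (t := Finset.univ) (fun _ _ => Finset.mem_univ _)]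
    apply Finset.sum_congr rfl
    intro c _
    congr 1
    rw [Finset.filter_filter]
    apply Finset.filter_congr
    intro u _
    simp [monochromaticInduced]
  have htotal : (∑ v : W, (Finset.univ.filter fun u : W => G.Adj v.1 u.1).card)
      ≤ 2 * d * (Finset.univ : Finset W).card * k := by
    calc (∑ v : W, (Finset.univ.filter fun u : W => G.Adj v.1 u.1).card)
        = ∑ v : W, ∑ c : Fin k, (Finset.univ.filter fun u : W =>
            (monochromaticInduced G φ c W).Adj v u).card :=
          Finset.sum_congr rfl (fun v _ => hdecomp v)
      _ = ∑ c : Fin k, ∑ v : W, (Finset.univ.filter fun u : W =>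
            (monochromaticInduced G φ c W).Adj v u).card := Finset.sum_comm
      _ ≤ ∑ _c : Fin k, 2 * d * (Finset.univ : Finset W).card :=
          Finset.sum_le_sum (fun c _ => hsumc c)
      _ = 2 * d * (Finset.univ : Finset W).card * k := by
          simp [Finset.sum_const, Fintype.card_fin, mul_comm]
  -- bridge between subtype counts and Finset counts
  have hbridge : ∀ v : V, (S.filter fun u => G.Adj v u).card
      = (Finset.univ.filter fun u : W => G.Adj v u.1).card := by
    intro v
    refine (Finset.card_bij (fun (u : W) _ => u.1) ?_ ?_ ?_).symm
    · intro a ha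
      rw [Finset.mem_filter] at ha ⊢
      exact ⟨Finset.mem_coe.1 a.2, ha.2⟩
    · intro a _ b _ hab
      exact Subtype.ext hab
    · intro b hb
      rw [Finset.mem_filter] at hb
      exact ⟨⟨b, Finset.mem_coe.2 hb.1⟩, Finset.mem_filter.2 ⟨Finset.mem_univ _, hb.2⟩, rfl⟩
  have hWcard : (Finset.univ : Finset W).card = S.card := by
    rw [Finset.card_univ]
    exact Fintype.card_coe S
  by_contra hcon
  push_neg at hcon
  have hlow : ∀ v : W, 2 * k * d + 1 ≤ (Finset.univ.filter fun u : W => G.Adj v.1 u.1).card := by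
    intro v
    have h := hcon v.1 (Finset.mem_coe.1 v.2)
    rw [hbridge v.1] at h
    rw [← hd] at h
    omega
  have hge : (Finset.univ : Finset W).card * (2 * k * d + 1)
      ≤ ∑ v : W, (Finset.univ.filter fun u : W => G.Adj v.1 u.1).card := by
    calc (Finset.univ : Finset W).card * (2 * k * d + 1)
        = ∑ _v : W, (2 * k * d + 1) := by rw [Finset.sum_const, smul_eq_mul]
      _ ≤ _ := Finset.sum_le_sum (fun v _ => hlow v)
  rw [hWcard] at hge htotal
  have hpos : 1 ≤ S.card := Finset.card_pos.2 hS
  have hring : S.card * (2 * k * d + 1) = 2 * d * S.card * k + S.card := by ring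
  rw [hring] at hge
  have hfin := hge.trans htotal
  set m := 2 * d * S.card * k
  omega
end

section
/- For all integers s, k ≥ 1 there exists an integer t such that for every colouring of the edges of the complete bipartite graph K_{t,t} with k colours, there is a monochromatic copy of K_{s,s}: some colour class contains K_{s,s} as a subgraph. -/
/-- For all `s, k ≥ 1` there is `t` such that every `k`-colouring of the
edges of `K_{t,t}` (edges are modelled as pairs in `Fin t × Fin t`, one side times the other)
yields a monochromatic copy of `K_{s,s}`: a colour `c` and `s`-sets `A`, `B` of left and right
vertices with all edges between `A` and `B` coloured `c`. -/
theorem stmt13 (s k : ℕ) (hs : 1 ≤ s) (hk : 1 ≤ k) :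
    ∃ t : ℕ, ∀ φ : Fin t × Fin t → Fin k,
      ∃ c : Fin k, ∃ A B : Finset (Fin t), A.card = s ∧ B.card = s ∧
        ∀ a ∈ A, ∀ b ∈ B, φ (a, b) = c := by
  classical
  obtain ⟨n, hn⟩ : ∃ n, n = k * (s - 1) + 1 := ⟨_, rfl⟩
  have hnt : n ≤ s * k ^ n := by
    have h1 : k * (s - 1) + k = k * s := by
      rw [← Nat.mul_succ]; congr 1; omega
    have h2 : n ≤ k * s := by omega
    have h3 : k ≤ k ^ n := Nat.le_self_pow (by omega) k
    calc n ≤ k * s := h2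
      _ ≤ k ^ n * s := Nat.mul_le_mul_right s h3
      _ = s * k ^ n := mul_comm _ _
  refine ⟨s * k ^ n, fun φ => ?_⟩
  let g : Fin (s * k ^ n) → (Fin n → Fin k) := fun b i => φ (Fin.castLE hnt i, b)
  have hcard : (Finset.univ : Finset (Fin n → Fin k)).card * s ≤
      (Finset.univ : Finset (Fin (s * k ^ n))).card := by
    simp [Fintype.card_fun, mul_comm]
  haveI : NeZero k := ⟨by omega⟩
  obtain ⟨f, -, hf⟩ := Finset.exists_le_card_fiber_of_mul_le_card_of_maps_to
    (fun b (_ : b ∈ (Finset.univ : Finset (Fin (s * k ^ n)))) => Finset.mem_univ (g b))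
    Finset.univ_nonempty hcard
  have hcard2 : (Finset.univ : Finset (Fin k)).card * (s - 1) <
      (Finset.univ : Finset (Fin n)).card := by
    simp [hn]
  obtain ⟨c, -, hc⟩ := Finset.exists_lt_card_fiber_of_mul_lt_card_of_maps_to
    (fun i (_ : i ∈ (Finset.univ : Finset (Fin n))) => Finset.mem_univ (f i)) hcard2
  have hsc : s ≤ (Finset.univ.filter fun i => f i = c).card := by
    omega
  obtain ⟨A₀, hA₀sub, hA₀card⟩ := Finset.exists_subset_card_eq hsc
  obtain ⟨B, hBsub, hBcard⟩ := Finset.exists_subset_card_eq hf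
  refine ⟨c, A₀.map (Fin.castLEEmb hnt), B, by simp [hA₀card], hBcard, ?_⟩
  intro a ha b hb
  obtain ⟨i, hi, rfl⟩ := Finset.mem_map.1 ha
  have hfi : f i = c := (Finset.mem_filter.1 (hA₀sub hi)).2
  have hgb : g b = f := (Finset.mem_filter.1 (hBsub hb)).2
  have : φ (Fin.castLE hnt i, b) = g b i := rfl
  rw [show ((Fin.castLEEmb hnt) i) = Fin.castLE hnt i from rfl, this, hgb, hfi]
end

section
/- For every integer s ≥ 1 there exists an integer t such that every orientation D of the complete bipartite graph K_{t,t} contains →K_{s,s} as an induced subdigraph; that is, there exist sets S and T of s vertices each, lying on opposite sides of the bipartition, such that every arc of D between S and T is oriented from S to T. -/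
open Classical

/-- A digraph (given as a relation) is an oriented graph: no loops and no digons. -/
def IsOriented {V : Type*} (D : V → V → Prop) : Prop :=
  ∀ u v : V, D u v → ¬ D v u

/-- `D` is an orientation of the simple graph `G`. -/
def IsOrientationOf {V : Type*} (G : SimpleGraph V) (D : V → V → Prop) : Prop :=
  IsOriented D ∧ ∀ u v : V, G.Adj u v ↔ (D u v ∨ D v u)

/-- For every `s ≥ 1` there is `t` such that every orientation `D` of the
complete bipartite graph `K_{t,t}` contains `→K_{s,s}` as an induced subdigraph: there are
`s`-sets `S`, `T` on opposite sides of the bipartition with every arc between them oriented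
from `S` to `T`. -/
theorem stmt14 (s : ℕ) (hs : 1 ≤ s) :
    ∃ t : ℕ, ∀ D : (Fin t ⊕ Fin t) → (Fin t ⊕ Fin t) → Prop,
      IsOrientationOf (completeBipartiteGraph (Fin t) (Fin t)) D →
      ∃ A B : Finset (Fin t), A.card = s ∧ B.card = s ∧
        ((∀ a ∈ A, ∀ b ∈ B, D (Sum.inl a) (Sum.inr b)) ∨
         (∀ a ∈ A, ∀ b ∈ B, D (Sum.inr b) (Sum.inl a))) := by
  set m : ℕ := 2 * s - 1 with hm
  set t : ℕ := (2 ^ m * 2) * s with ht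
  have hmt : m ≤ t := by
    have h1 : m < 2 ^ m := Nat.lt_two_pow_self
    have h2 : 2 ^ m ≤ t := by
      rw [ht]
      calc 2 ^ m = 2 ^ m * 1 := (mul_one _).symm
        _ ≤ (2 ^ m * 2) * s := by
            apply Nat.mul_le_mul
            · exact Nat.le_mul_of_pos_right _ (by norm_num)
            · exact hs
    omega
  refine ⟨t, fun D hD => ?_⟩
  obtain ⟨hOr, hAdj⟩ := hD
  set e : Fin m → Fin t := Fin.castLE hmt with he
  have hei : Function.Injective e := Fin.castLE_injective hmt
  -- for each a, direction to each chosen right vertex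
  have hall : ∀ (a : Fin t) (i : Fin m),
      D (Sum.inl a) (Sum.inr (e i)) ∨ D (Sum.inr (e i)) (Sum.inl a) := by
    intro a i
    have : (completeBipartiteGraph (Fin t) (Fin t)).Adj (Sum.inl a) (Sum.inr (e i)) := by
      simp
    exact (hAdj _ _).mp this
  -- choose for each a an s-set and direction
  have hchoice : ∀ a : Fin t, ∃ p : Finset (Fin m) × Bool, p.1.card = s ∧
      ∀ i ∈ p.1, if p.2 then D (Sum.inl a) (Sum.inr (e i))
        else D (Sum.inr (e i)) (Sum.inl a) := by
    intro a
    set F : Finset (Fin m) := Finset.univ.filter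
      (fun i => D (Sum.inl a) (Sum.inr (e i))) with hF
    have hsum : F.card + (Finset.univ.filter
        (fun i => ¬ D (Sum.inl a) (Sum.inr (e i)))).card = m := by
      rw [hF, Finset.card_filter_add_card_filter_not]
      simp
    by_cases hc : s ≤ F.card
    · obtain ⟨S, hS, hScard⟩ := Finset.exists_subset_card_eq hc
      refine ⟨(S, true), hScard, fun i hi => ?_⟩
      have := hS hi
      simp only [hF, Finset.mem_filter] at this
      simpa using this.2
    · have hc2 : s ≤ (Finset.univ.filter
          (fun i => ¬ D (Sum.inl a) (Sum.inr (e i)))).card := by omega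
      obtain ⟨S, hS, hScard⟩ := Finset.exists_subset_card_eq hc2
      refine ⟨(S, false), hScard, fun i hi => ?_⟩
      have := hS hi
      simp only [Finset.mem_filter] at this
      have := this.2
      simp only [if_false]
      rcases hall a i with h | h
      · exact absurd h this
      · exact h
  choose g hg1 hg2 using hchoice
  -- pigeonhole
  have hcard : Fintype.card (Finset (Fin m) × Bool) * s ≤ Fintype.card (Fin t) := by
    simp [Fintype.card_finset, ht]
  obtain ⟨⟨S, d⟩, hfib⟩ := Fintype.exists_le_card_fiber_of_mul_le_card (f := g) hcard
  obtain ⟨A, hA, hAcard⟩ := Finset.exists_subset_card_eq hfib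
  have hgA : ∀ a ∈ A, g a = (S, d) := by
    intro a ha
    have := hA ha
    simpa using this
  have hScard : S.card = s := by
    obtain ⟨a, ha⟩ := Finset.card_pos.mp (by omega : 0 < A.card)
    have := hg1 a
    rw [hgA a ha] at this
    exact this
  refine ⟨A, S.image e, hAcard, by rw [Finset.card_image_of_injective _ hei, hScard], ?_⟩
  cases d with
  | true =>
    left
    intro a ha b hb
    obtain ⟨i, hi, rfl⟩ := Finset.mem_image.mp hb
    have h2 := hg2 a i
    rw [hgA a ha] at h2
    simpa using h2 hi
  | false =>
    right
    intro a ha b hb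
    obtain ⟨i, hi, rfl⟩ := Finset.mem_image.mp hb
    have h2 := hg2 a i
    rw [hgA a ha] at h2
    simpa using h2 hi
end

section
/- Let ℓ ≥ 3 be an integer and let D be a digraph containing an induced subdigraph K which is an antidirected subdivision of the complete graph K_ℓ. Then D contains an induced subdigraph which is an antidirected cycle on at least 2ℓ vertices. -/
open Classical

/-- The induced subdigraph of `D` on `S` is antidirected: every vertex of `S` is a source or a
sink within `S`. -/
def AntidirectedOn {V : Type*} (D : V → V → Prop) (S : Set V) : Prop :=
  ∀ v ∈ S, (∀ u ∈ S, ¬ D u v) ∨ (∀ u ∈ S, ¬ D v u)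

/-- `H` is an even subdivision of the complete graph `K_r`: there are `r` branch vertices and,
between any two of them, a path of positive even length; these paths are internally disjoint
from each other and from the branch vertices, and together they cover all vertices and all
edges of `H`. -/
def IsEvenSubdivOfComplete {W : Type*} (H : SimpleGraph W) (r : ℕ) : Prop :=
  ∃ b : Fin r → W, Function.Injective b ∧
    ∃ P : ∀ i j : Fin r, i < j → H.Walk (b i) (b j),
      (∀ i j (h : i < j), (P i j h).IsPath) ∧
      (∀ i j (h : i < j), Even (P i j h).length ∧ 0 < (P i j h).length) ∧
      (∀ i j (h : i < j), ∀ w ∈ (P i j h).support, w ∈ Set.range b → w = b i ∨ w = b j) ∧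
      (∀ i j (hij : i < j), ∀ k l (hkl : k < l), (i, j) ≠ (k, l) →
        ∀ w, w ∈ (P i j hij).support → w ∈ (P k l hkl).support → w ∈ Set.range b) ∧
      (∀ w : W, w ∈ Set.range b ∨ ∃ i j, ∃ h : i < j, w ∈ (P i j h).support) ∧
      (∀ e ∈ H.edgeSet, ∃ i j, ∃ h : i < j, e ∈ (P i j h).edges)

/- ### Auxiliary lemmas -/

lemma mod_sub_lemma {n k l : ℕ} (hn : 2 ≤ n) (hk : k < n) (hl : l < n) :
    ((⟨l, hl⟩ : Fin n) - ⟨k, hk⟩).val = 1 ↔ l = (k + 1) % n := by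
  rw [Fin.sub_def]
  simp only []
  rcases lt_or_ge (k+1) n with h|h
  · rw [Nat.mod_eq_of_lt h]
    rcases le_or_gt n (n - k + l) with h3|h3
    · rw [Nat.mod_eq_sub_mod h3, Nat.mod_eq_of_lt (by omega)]; omega
    · rw [Nat.mod_eq_of_lt h3]; omega
  · rw [show k + 1 = n by omega, Nat.mod_self, show n - k + l = 1 + l by omega]
    rcases lt_trichotomy (1+l) n with h4|h4|h4
    · rw [Nat.mod_eq_of_lt h4]; omega
    · rw [h4, Nat.mod_self]; omega
    · omega

/-- Positions of an edge in the support of a walk. -/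
lemma walk_edge_pos {α : Type*} {G : SimpleGraph α} {u v : α} (p : G.Walk u v) {e : Sym2 α}
    (he : e ∈ p.edges) :
    ∃ t, ∃ h : t + 1 < p.support.length,
      s(p.support.get ⟨t, by omega⟩, p.support.get ⟨t+1, h⟩) = e := by
  induction p with
  | nil => simp at he
  | @cons a c d hadj q ih =>
    rw [SimpleGraph.Walk.edges_cons, List.mem_cons] at he
    rcases he with he | he
    · have hl : 0 + 1 < (SimpleGraph.Walk.cons hadj q).support.length := by
        simp [SimpleGraph.Walk.support_cons, SimpleGraph.Walk.length_support]
      refine ⟨0, hl, ?_⟩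
      have h1 : (SimpleGraph.Walk.cons hadj q).support.get ⟨0, by omega⟩ = a := rfl
      have h2 : (SimpleGraph.Walk.cons hadj q).support.get ⟨1, hl⟩ =
          q.support.get ⟨0, by simp [SimpleGraph.Walk.length_support]⟩ := rfl
      have h3 : q.support.get ⟨0, by simp [SimpleGraph.Walk.length_support]⟩ = c := by
        rw [List.get_eq_getElem, ← List.head_eq_getElem_zero (by simp)]
        exact q.head_support
      rw [h1, h2, h3, he]
    · obtain ⟨t, h, hs⟩ := ih he
      have hl : (t + 1) + 1 < (SimpleGraph.Walk.cons hadj q).support.length := by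
        simp only [SimpleGraph.Walk.support_cons, List.length_cons]
        omega
      refine ⟨t+1, hl, ?_⟩
      have h1 : (SimpleGraph.Walk.cons hadj q).support.get ⟨t+1, by omega⟩ =
          q.support.get ⟨t, by omega⟩ := rfl
      have h2 : (SimpleGraph.Walk.cons hadj q).support.get ⟨t+2, hl⟩ =
          q.support.get ⟨t+1, h⟩ := rfl
      rw [h1, h2, hs]

/-- Nodup list describing a cycle gives an isomorphism to `cycleGraph`. -/
lemma cycle_iso_of_list {α : Type*} [DecidableEq α] (G : SimpleGraph α) (M : List α) (n : ℕ)
    (hn : 3 ≤ n) (hlen : M.length = n + 1)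
    (hne : M ≠ [])
    (hcyc : M.getLast hne = M.head hne)
    (hnodup : M.dropLast.Nodup)
    (hchain : M.Chain' G.Adj)
    (hedges : ∀ x y : α, x ∈ M → y ∈ M → G.Adj x y →
      ∃ t, ∃ h : t + 1 < M.length,
        (M.get ⟨t, by omega⟩ = x ∧ M.get ⟨t+1, h⟩ = y) ∨
        (M.get ⟨t, by omega⟩ = y ∧ M.get ⟨t+1, h⟩ = x)) :
    Nonempty (G.induce {v | v ∈ M} ≃g SimpleGraph.cycleGraph n) := by
  set L := M.dropLast with hL
  have hLlen : L.length = n := by simp [hL, hlen]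
  have hget : ∀ k (hk : k < n), M.get ⟨k, by omega⟩ = L.get ⟨k, by omega⟩ := by
    intro k hk
    simp only [List.get_eq_getElem, hL, List.getElem_dropLast]
  have hgetn : M.get ⟨n, by omega⟩ = L.get ⟨0, by omega⟩ := by
    have h1 : M.get ⟨n, by omega⟩ = M.getLast hne := by
      rw [List.getLast_eq_getElem]; simp [hlen]
    have h2 : M.head hne = M.get ⟨0, by omega⟩ := by
      rw [List.head_eq_getElem_zero]; simp
    rw [h1, hcyc, h2, hget 0 (by omega)]
  have hmem : ∀ x, x ∈ M ↔ x ∈ L := by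
    intro x
    constructor
    · intro hx
      rw [← List.dropLast_append_getLast hne, List.mem_append] at hx
      rcases hx with hx | hx
      · exact hx
      · simp only [List.mem_singleton] at hx
        subst hx
        rw [hcyc]
        have h0 : M.get ⟨0, by omega⟩ ∈ L := by
          rw [hget 0 (by omega)]; exact List.get_mem _ _
        rw [List.head_eq_getElem_zero hne]
        exact h0
    · intro hx
      exact List.mem_of_mem_dropLast hx
  -- step adjacency
  have step : ∀ k (hk : k < n),
      G.Adj (L.get ⟨k, by omega⟩)
        (L.get ⟨(k+1) % n, by rw [hLlen]; exact Nat.mod_lt _ (by omega)⟩) := by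
    intro k hk
    have hc : G.Adj (M.get ⟨k, by omega⟩) (M.get ⟨k+1, by omega⟩) :=
      List.isChain_iff_getElem.mp hchain k (by omega)
    rcases lt_or_ge (k+1) n with h|h
    · rw [hget k hk, hget (k+1) h] at hc
      have : (k+1) % n = k+1 := Nat.mod_eq_of_lt h
      convert hc using 2
      exact Fin.ext this
    · have hk1 : k + 1 = n := by omega
      have : (k+1) % n = 0 := by rw [hk1]; exact Nat.mod_self n
      rw [hget k hk] at hc
      rw [show M.get ⟨k+1, by omega⟩ = M.get ⟨n, by omega⟩ from by congr 1; exact Fin.ext hk1] at hc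
      rw [hgetn] at hc
      convert hc using 2
      exact Fin.ext this
  -- full adjacency characterization on L indices
  have adj_iff : ∀ k l (hk : k < n) (hl : l < n),
      G.Adj (L.get ⟨k, by omega⟩) (L.get ⟨l, by omega⟩) ↔ (l = (k+1) % n ∨ k = (l+1) % n) := by
    intro k l hk hl
    constructor
    · intro hadj
      obtain ⟨t, ht, hcase⟩ :=
        hedges _ _ ((hmem _).2 (List.get_mem _ _)) ((hmem _).2 (List.get_mem _ _)) hadj
      have ht' : t < n := by omega
      have e1 : M.get ⟨t, by omega⟩ = L.get ⟨t, by omega⟩ := hget t ht'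
      have e2 : M.get ⟨t+1, ht⟩ =
          L.get ⟨(t+1) % n, by rw [hLlen]; exact Nat.mod_lt _ (by omega)⟩ := by
        rcases lt_or_ge (t+1) n with h|h
        · rw [hget (t+1) h]; congr 1; exact Fin.ext (Nat.mod_eq_of_lt h).symm
        · have h1 : t + 1 = n := by omega
          rw [show M.get ⟨t+1, by omega⟩ = M.get ⟨n, by omega⟩ from by congr 1; exact Fin.ext h1,
            hgetn]
          have hmod : (t+1) % n = 0 := by rw [h1]; exact Nat.mod_self n
          congr 1; exact Fin.ext hmod.symm
      rcases hcase with ⟨ha, hb⟩ | ⟨ha, hb⟩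
      · rw [e1] at ha; rw [e2] at hb
        have hik : t = k := by
          have := hnodup.get_inj_iff.mp ha; simpa using this
        have hjl : (t+1) % n = l := by
          have := hnodup.get_inj_iff.mp hb; simpa using this
        left; rw [← hjl, hik]
      · rw [e1] at ha; rw [e2] at hb
        have hik : t = l := by
          have := hnodup.get_inj_iff.mp ha; simpa using this
        have hjl : (t+1) % n = k := by
          have := hnodup.get_inj_iff.mp hb; simpa using this
        right; rw [← hjl, hik]
    · intro hcase
      rcases hcase with h | h
      · have := step k hk
        convert this using 2
        exact Fin.ext h
      · have := (step l hl).symm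
        convert this using 2
        exact Fin.ext h
  -- build the iso
  have hnz : NeZero n := ⟨by omega⟩
  refine ⟨?_⟩
  have hsetmem : ∀ x : α, x ∈ ({v | v ∈ M} : Set α) ↔ x ∈ L := hmem
  let f : {v | v ∈ M} ≃ Fin n :=
    (Equiv.subtypeEquiv (Equiv.refl α) (by simpa using hsetmem)).trans
      ((hnodup.getEquiv L).symm.trans (finCongr hLlen))
  have key : ∀ x : {v | v ∈ M}, (x : α) = L.get ⟨(f x).val, by omega⟩ := by
    intro x
    simp only [f, Equiv.trans_apply, Equiv.subtypeEquiv_apply, Equiv.refl_apply, finCongr_apply,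
      Fin.coe_cast]
    exact (List.idxOf_get _).symm
  suffices mri : ∀ a b : {v | v ∈ M},
      (SimpleGraph.cycleGraph n).Adj (f a) (f b) ↔ (G.induce {v | v ∈ M}).Adj a b by
    exact { toEquiv := f, map_rel_iff' := fun {a b} => mri a b }
  intro a b
  rw [SimpleGraph.comap_adj]
  simp only [Function.Embedding.coe_subtype]
  constructor
  · intro h
    have h2 := SimpleGraph.cycleGraph_adj'.mp h
    rw [key a, key b]
    refine (adj_iff (f a).val (f b).val (by omega) (by omega)).mpr ?_
    rcases h2 with h2 | h2
    · right
      have := (mod_sub_lemma (n := n) (k := (f b).val) (l := (f a).val) (by omega) (by omega)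
        (by omega)).mp (by simpa using h2)
      omega
    · left
      have := (mod_sub_lemma (n := n) (k := (f a).val) (l := (f b).val) (by omega) (by omega)
        (by omega)).mp (by simpa using h2)
      omega
  · intro h
    rw [key a, key b] at h
    have h1 := (adj_iff (f a).val (f b).val (by omega) (by omega)).mp h
    rw [SimpleGraph.cycleGraph_adj']
    rcases h1 with h1 | h1
    · right
      simpa using (mod_sub_lemma (n := n) (k := (f a).val) (l := (f b).val) (by omega) (by omega)
        (by omega)).mpr h1
    · left
      simpa using (mod_sub_lemma (n := n) (k := (f b).val) (l := (f a).val) (by omega) (by omega)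
        (by omega)).mpr h1

open Fin.NatCast

/-- Let `ℓ ≥ 3` and let `D` be a finite loopless digraph containing an
induced subdigraph (on a vertex set `S`) which is an antidirected subdivision of `K_ℓ`. Then
`D` contains an induced subdigraph which is an antidirected cycle on at least `2ℓ` vertices. -/
theorem stmt15 (ℓ : ℕ) (hℓ : 3 ≤ ℓ) (V : Type) [Fintype V] (D : V → V → Prop)
    (hirr : Irreflexive D) (S : Set V)
    (hanti : AntidirectedOn D S)
    (hsub : IsEvenSubdivOfComplete ((SimpleGraph.fromRel D).induce S) ℓ) :
    ∃ T : Set V, AntidirectedOn D T ∧ ∃ n : ℕ, 2 * ℓ ≤ n ∧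
      Nonempty ((SimpleGraph.fromRel D).induce T ≃g SimpleGraph.cycleGraph n) := by
  classical
  set H : SimpleGraph ↥S := (SimpleGraph.fromRel D).induce S with hH
  obtain ⟨b, hbinj, P, hpath, hplen, hbr, hdisj, _hcov, hedge⟩ := hsub
  haveI : NeZero ℓ := ⟨by omega⟩
  have hadd : ∀ k : Fin ℓ, ((k + 1 : Fin ℓ) : ℕ) = ((k : ℕ) + 1) % ℓ := by
    intro k
    rw [Fin.add_def]
    simp [Fin.val_one', Nat.mod_eq_of_lt (show 1 < ℓ by omega)]
  -- the walks along consecutive branch vertices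
  have hQex : ∀ k : Fin ℓ, ∃ (c : H.Walk (b k) (b (k+1))), ∃ i j, ∃ hij : i < j,
      c.IsPath ∧ 2 ≤ c.length ∧
      (∀ w, w ∈ c.support ↔ w ∈ (P i j hij).support) ∧
      (∀ e, e ∈ c.edges ↔ e ∈ (P i j hij).edges) ∧
      ((i = k ∧ (j : ℕ) = (k : ℕ) + 1) ∨ ((i : ℕ) = 0 ∧ j = k ∧ (k : ℕ) + 1 = ℓ)) := by
    intro k
    by_cases h : (k : ℕ) + 1 < ℓ
    · set j : Fin ℓ := ⟨(k : ℕ) + 1, h⟩ with hj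
      have hkj : k < j := by simp [hj, Fin.lt_def]
      have hjeq : j = k + 1 := by
        apply Fin.ext
        rw [hadd, Nat.mod_eq_of_lt h]
      refine ⟨(P k j hkj).copy rfl (congrArg b hjeq), k, j, hkj, ?_, ?_, ?_, ?_, ?_⟩
      · simpa using hpath k j hkj
      · have := hplen k j hkj
        obtain ⟨⟨c, hc⟩, hpos⟩ := this
        simp only [SimpleGraph.Walk.length_copy]
        omega
      · intro w; simp
      · intro e; simp
      · left; exact ⟨rfl, by simp [hj]⟩
    · have hk1 : (k : ℕ) + 1 = ℓ := by have := k.isLt; omega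
      have h0k : (0 : Fin ℓ) < k := by
        rw [Fin.lt_iff_val_lt_val]
        simp only [Fin.val_zero]
        omega
      have hke : (0 : Fin ℓ) = k + 1 := by
        apply Fin.ext
        rw [hadd, hk1, Nat.mod_self]
        rfl
      refine ⟨((P 0 k h0k).reverse).copy rfl (congrArg b hke), 0, k, h0k, ?_, ?_, ?_, ?_, ?_⟩
      · simpa using (hpath 0 k h0k).reverse
      · have := hplen 0 k h0k
        obtain ⟨⟨c, hc⟩, hpos⟩ := this
        simp only [SimpleGraph.Walk.length_copy, SimpleGraph.Walk.length_reverse]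
        omega
      · intro w; simp [SimpleGraph.Walk.support_reverse]
      · intro e; simp [SimpleGraph.Walk.edges_reverse]
      · right; exact ⟨rfl, rfl, hk1⟩
  choose Q I J hIJ hQpath hQlen hQsup hQedg hQdesc using hQex
  -- endpoints of Q k among branch vertices
  have hQend : ∀ k : Fin ℓ, (b (I k) = b k ∧ b (J k) = b (k+1)) ∨
      (b (I k) = b (k+1) ∧ b (J k) = b k) := by
    intro k
    rcases hQdesc k with ⟨h1, h2⟩ | ⟨h1, h2, h3⟩
    · left
      constructor
      · rw [h1]
      · congr 1
        apply Fin.ext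
        rw [hadd, Nat.mod_eq_of_lt (by rw [← h2]; exact (J k).isLt), ← h2]
    · right
      constructor
      · congr 1
        apply Fin.ext
        rw [hadd, h3, Nat.mod_self, h1]
      · rw [h2]
  have hpairne : ∀ k k' : Fin ℓ, k ≠ k' → (I k, J k) ≠ (I k', J k') := by
    intro k k' hne heq
    have hI : I k = I k' := congrArg Prod.fst heq
    have hJ : J k = J k' := congrArg Prod.snd heq
    have vI := congrArg Fin.val hI
    have vJ := congrArg Fin.val hJ
    have vne : (k : ℕ) ≠ (k' : ℕ) := fun h => hne (Fin.ext h)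
    rcases hQdesc k with ⟨h1, h2⟩ | ⟨h1, h2, h3⟩ <;>
        rcases hQdesc k' with ⟨h1', h2'⟩ | ⟨h1', h2', h3'⟩ <;>
      [ (have a1 := congrArg Fin.val h1; have a1' := congrArg Fin.val h1');
        (have a1 := congrArg Fin.val h1; have a2' := congrArg Fin.val h2');
        (have a2 := congrArg Fin.val h2; have a1' := congrArg Fin.val h1');
        (have a2 := congrArg Fin.val h2; have a2' := congrArg Fin.val h2')] <;>
      omega
  have notlast : ∀ k : Fin ℓ, b (k+1) ∉ (Q k).support.dropLast := by
    intro k hmem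
    have hnd := (hQpath k).support_nodup
    have hnnil := (Q k).support_ne_nil
    have hgl : (Q k).support.getLast hnnil = b (k+1) := (Q k).getLast_support
    rw [← List.dropLast_append_getLast hnnil, List.nodup_append] at hnd
    exact hnd.2.2 _ hmem _ (by rw [hgl]; exact List.mem_singleton_self _) rfl
  have dropLast_branch : ∀ (k : Fin ℓ) w, w ∈ (Q k).support.dropLast → w ∈ Set.range b →
      w = b k := by
    intro k w hw hwr
    have hws : w ∈ (Q k).support := List.mem_of_mem_dropLast hw
    have := hbr (I k) (J k) (hIJ k) w ((hQsup k w).mp hws) hwr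
    have hwne : w ≠ b (k+1) := fun hcon => notlast k (hcon ▸ hw)
    rcases hQend k with ⟨e1, e2⟩ | ⟨e1, e2⟩ <;> rcases this with h | h
    · rw [h, e1]
    · exact absurd (h.trans e2) hwne
    · exact absurd (h.trans e1) hwne
    · rw [h, e2]
  -- the closed walk
  have claim : ∀ m : ℕ, m ≤ ℓ → ∃ c : H.Walk (b 0) (b ((m : ℕ) : Fin ℓ)),
      c.support = ((List.range m).flatMap fun k => (Q ((k : ℕ) : Fin ℓ)).support.dropLast)
        ++ [b ((m : ℕ) : Fin ℓ)] ∧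
      c.length = ∑ k ∈ Finset.range m, (Q ((k : ℕ) : Fin ℓ)).length ∧
      (∀ e, e ∈ c.edges ↔ ∃ k, ∃ _h : k < m, e ∈ (Q ((k : ℕ) : Fin ℓ)).edges) := by
    intro m
    induction m with
    | zero =>
      intro _
      refine ⟨SimpleGraph.Walk.nil.copy rfl (congrArg b (by simp)), ?_, ?_, ?_⟩
      · simp
      · simp
      · intro e; simp
    | succ m ih =>
      intro hm1
      obtain ⟨c, hsup, hlen', hedg⟩ := ih (by omega)
      have hcast : ((m : ℕ) : Fin ℓ) + 1 = (((m + 1 : ℕ)) : Fin ℓ) := (Nat.cast_add_one m).symm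
      refine ⟨c.append ((Q ((m : ℕ) : Fin ℓ)).copy rfl (congrArg b hcast)), ?_, ?_, ?_⟩
      · rw [SimpleGraph.Walk.support_append, SimpleGraph.Walk.support_copy, hsup]
        rw [List.range_succ, List.flatMap_append, List.flatMap_singleton, List.append_assoc,
          List.append_assoc]
        congr 1
        rw [List.singleton_append]
        rw [← SimpleGraph.Walk.support_eq_cons]
        conv_lhs => rw [← List.dropLast_append_getLast ((Q ((m : ℕ) : Fin ℓ)).support_ne_nil)]
        congr 1
        rw [(Q ((m : ℕ) : Fin ℓ)).getLast_support]
        rw [hcast]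
      · rw [SimpleGraph.Walk.length_append, SimpleGraph.Walk.length_copy, hlen',
          Finset.sum_range_succ]
      · intro e
        rw [SimpleGraph.Walk.edges_append, SimpleGraph.Walk.edges_copy, List.mem_append, hedg]
        constructor
        · rintro (⟨k, hk, hke⟩ | hke)
          · exact ⟨k, by omega, hke⟩
          · exact ⟨m, by omega, hke⟩
        · rintro ⟨k, hk, hke⟩
          rcases Nat.lt_or_ge k m with h | h
          · exact Or.inl ⟨k, h, hke⟩
          · have : k = m := by omega
            subst this
            exact Or.inr hke
  obtain ⟨C, hCsup, hClen, hCedg⟩ := claim ℓ le_rfl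
  set MV : List V := C.support.map Subtype.val with hMV
  have hsumlen : 2 * ℓ ≤ C.length := by
    rw [hClen]
    calc 2 * ℓ = ∑ _k ∈ Finset.range ℓ, 2 := by
          rw [Finset.sum_const, Finset.card_range, smul_eq_mul, mul_comm]
      _ ≤ _ := Finset.sum_le_sum fun k _ => hQlen _
  have hn3 : 3 ≤ C.length := by omega
  have hlenMV : MV.length = C.length + 1 := by
    rw [hMV, List.length_map, SimpleGraph.Walk.length_support]
  have hneMV : MV ≠ [] := by
    intro hcon
    have := congrArg List.length hcon
    rw [hlenMV] at this
    simp at this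
  -- endpoints
  have hA : C.support.getLast C.support_ne_nil = b 0 := by
    rw [SimpleGraph.Walk.getLast_support]
    exact congrArg b (Fin.natCast_self ℓ)
  have hB : C.support.head C.support_ne_nil = b 0 := C.head_support
  have hcycMV : MV.getLast hneMV = MV.head hneMV := by
    rw [List.getLast_eq_getElem, List.head_eq_getElem_zero]
    simp only [hMV, List.getElem_map, List.length_map]
    congr 1
    rw [← List.getLast_eq_getElem, ← List.head_eq_getElem_zero, hA, hB]
    exact C.support_ne_nil
    exact C.support_ne_nil
  -- nodup
  have hnodupMV : MV.dropLast.Nodup := by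
    rw [hMV, ← List.map_dropLast]
    apply List.Nodup.map Subtype.val_injective
    rw [hCsup, List.dropLast_concat, List.nodup_flatMap]
    constructor
    · intro k _
      exact List.Nodup.sublist (List.dropLast_sublist _) ((hQpath _).support_nodup)
    · refine List.Pairwise.imp_of_mem ?_ (List.pairwise_lt_range (n := ℓ))
      intro a c ha hc hlt
      have haℓ := List.mem_range.mp ha
      have hcℓ := List.mem_range.mp hc
      have hnecast : ((a : ℕ) : Fin ℓ) ≠ ((c : ℕ) : Fin ℓ) := by
        intro hcon
        have := congrArg Fin.val hcon
        rw [Fin.val_cast_of_lt haℓ, Fin.val_cast_of_lt hcℓ] at this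
        omega
      intro w hw hw'
      have hwr : w ∈ Set.range b :=
        hdisj _ _ (hIJ _) _ _ (hIJ _) (hpairne _ _ hnecast) w
          ((hQsup _ _).mp (List.mem_of_mem_dropLast hw))
          ((hQsup _ _).mp (List.mem_of_mem_dropLast hw'))
      have h1 := dropLast_branch _ _ hw hwr
      have h2 := dropLast_branch _ _ hw' hwr
      exact hnecast (hbinj (h1.symm.trans h2))
  -- chain
  have hchainMV : MV.Chain' (SimpleGraph.fromRel D).Adj := by
    rw [hMV]; show List.IsChain _ _; rw [List.isChain_map]
    refine List.IsChain.imp ?_ C.isChain_adj_support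
    intro x y hxy
    rw [hH, SimpleGraph.comap_adj] at hxy
    simpa using hxy
  -- edges
  have hedgesMV : ∀ x y : V, x ∈ MV → y ∈ MV → (SimpleGraph.fromRel D).Adj x y →
      ∃ t, ∃ h : t + 1 < MV.length,
        (MV.get ⟨t, by omega⟩ = x ∧ MV.get ⟨t+1, h⟩ = y) ∨
        (MV.get ⟨t, by omega⟩ = y ∧ MV.get ⟨t+1, h⟩ = x) := by
    intro x y hx hy hadj
    obtain ⟨x', hx', rfl⟩ := List.mem_map.mp hx
    obtain ⟨y', hy', rfl⟩ := List.mem_map.mp hy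
    have hadj' : H.Adj x' y' := by
      rw [hH, SimpleGraph.comap_adj]
      simpa using hadj
    have he : s(x', y') ∈ H.edgeSet := hadj'
    obtain ⟨i0, j0, h0, hein⟩ := hedge _ he
    have hmain : ∃ k : Fin ℓ, s(x', y') ∈ (Q k).edges := by
      by_cases hused : ∃ k : Fin ℓ, (I k, J k) = (i0, j0)
      · obtain ⟨k, hk⟩ := hused
        have hI0 : I k = i0 := congrArg Prod.fst hk
        have hJ0 : J k = j0 := congrArg Prod.snd hk
        subst hI0
        subst hJ0
        exact ⟨k, (hQedg k _).mpr hein⟩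
      · exfalso
        push_neg at hused
        have hmemrange : ∀ w : ↥S, w ∈ C.support → w ∈ (P i0 j0 h0).support →
            w ∈ Set.range b := by
          intro w hw hw'
          rw [hCsup, List.mem_append] at hw
          rcases hw with hw | hw
          · rw [List.mem_flatMap] at hw
            obtain ⟨k, _, hwseg⟩ := hw
            exact hdisj _ _ (hIJ _) i0 j0 h0 (hused _) w
              ((hQsup _ _).mp (List.mem_of_mem_dropLast hwseg)) hw'
          · rw [List.mem_singleton] at hw
            exact ⟨_, hw.symm⟩
        have hxsup := (P i0 j0 h0).fst_mem_support_of_mem_edges hein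
        have hysup := (P i0 j0 h0).snd_mem_support_of_mem_edges hein
        have hxr := hmemrange x' hx' hxsup
        have hyr := hmemrange y' hy' hysup
        have hx2 := hbr i0 j0 h0 x' hxsup hxr
        have hy2 := hbr i0 j0 h0 y' hysup hyr
        have hxyne : x' ≠ y' := hadj'.ne
        have hbne : b i0 ≠ b j0 := fun hcon => h0.ne (hbinj hcon)
        have heq : s(x', y') = s(b i0, b j0) := by
          rcases hx2 with h | h <;> rcases hy2 with h' | h'
          · exact absurd (h.trans h'.symm) hxyne
          · rw [h, h']
          · rw [h, h', Sym2.eq_swap]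
          · exact absurd (h.trans h'.symm) hxyne
        rw [heq] at hein
        obtain ⟨t, ht, hts⟩ := walk_edge_pos _ hein
        have hnd := (hpath i0 j0 h0).support_nodup
        have hslen : (P i0 j0 h0).support.length = (P i0 j0 h0).length + 1 :=
          SimpleGraph.Walk.length_support _
        have hg0 : (P i0 j0 h0).support.get ⟨0, by omega⟩ = b i0 := by
          rw [List.get_eq_getElem, ← List.head_eq_getElem_zero (by simp)]
          exact (P i0 j0 h0).head_support
        have hgL : (P i0 j0 h0).support.get ⟨(P i0 j0 h0).length, by omega⟩ = b j0 := by
          have h1 := (P i0 j0 h0).getLast_support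
          rw [List.getLast_eq_getElem] at h1
          rw [List.get_eq_getElem]
          have hidx : (P i0 j0 h0).length = (P i0 j0 h0).support.length - 1 := by omega
          simp only [hidx]
          exact h1
        rcases Sym2.eq_iff.mp hts with ⟨ha, hb2⟩ | ⟨ha, hb2⟩
        · have ht0 : t = 0 := by
            have := hnd.get_inj_iff.mp (ha.trans hg0.symm)
            simpa using this
          have ht1 : t + 1 = (P i0 j0 h0).length := by
            have := hnd.get_inj_iff.mp (hb2.trans hgL.symm)
            simpa using this
          obtain ⟨cc, hcc⟩ := (hplen i0 j0 h0).1
          omega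
        · have ht1 : t + 1 = 0 := by
            have := hnd.get_inj_iff.mp (hb2.trans hg0.symm)
            simpa using this
          omega
    obtain ⟨k, hke⟩ := hmain
    have hCe : s(x', y') ∈ C.edges := by
      refine (hCedg _).mpr ⟨(k : ℕ), k.isLt, ?_⟩
      rw [Fin.cast_val_eq_self]
      exact hke
    obtain ⟨t, ht, hts⟩ := walk_edge_pos C hCe
    have htMV : t + 1 < MV.length := by
      rw [hMV, List.length_map]
      omega
    have hmap : ∀ (r : ℕ) (hr : r < C.support.length),
        MV.get ⟨r, by rw [hMV, List.length_map]; omega⟩ = ↑(C.support.get ⟨r, hr⟩) := by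
      intro r hr
      simp only [hMV, List.get_eq_getElem, List.getElem_map]
    rcases Sym2.eq_iff.mp hts with ⟨ha, hb2⟩ | ⟨ha, hb2⟩
    · exact ⟨t, htMV, Or.inl ⟨by rw [hmap t (by omega)]; exact congrArg _ ha,
        by rw [hmap (t+1) (by omega)]; exact congrArg _ hb2⟩⟩
    · exact ⟨t, htMV, Or.inr ⟨by rw [hmap t (by omega)]; exact congrArg _ ha,
        by rw [hmap (t+1) (by omega)]; exact congrArg _ hb2⟩⟩
  -- conclusion
  refine ⟨{v | v ∈ MV}, ?_, C.length, hsumlen, ?_⟩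
  · have hTsub : ∀ u, u ∈ ({v | v ∈ MV} : Set V) → u ∈ S := by
      intro u hu
      obtain ⟨x', _, rfl⟩ := List.mem_map.mp hu
      exact x'.2
    intro v hv
    rcases hanti v (hTsub v hv) with h | h
    · exact Or.inl fun u hu => h u (hTsub u hu)
    · exact Or.inr fun u hu => h u (hTsub u hu)
  · exact cycle_iso_of_list _ MV C.length hn3 hlenMV hneMV hcycMV hnodupMV hchainMV hedgesMV
end
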